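/- Selberg's inequality in a Hilbert space: for any finite family (ψ_m) of nonzero vectors and any vector ψ in an inner product space over ℂ, ∑_m |⟨ψ, ψ_m⟩|² / (∑_n |⟨ψ_m, ψ_n⟩|) ≤ ⟨ψ, ψ⟩. -/

import Mathlib

open Finset

theorem selberg_hilbert_inequality {H : Type*} [NormedAddCommGroup H]
    [InnerProductSpace ℂ H] {I : Type*} [Fintype I]
    (ψ : H) (Ψ : I → H)
    (hΨ : ∀ m : I, 0 < ∑ n : I, ‖(inner ℂ (Ψ m) (Ψ n) : ℂ)‖) :
    ∑ m : I, ‖(inner ℂ ψ (Ψ m) : ℂ)‖ ^ 2 / ∑ n : I, ‖(inner ℂ (Ψ m) (Ψ n) : ℂ)‖ ≤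
      ‖ψ‖ ^ 2 := by
  set D : I → ℝ := fun m => ∑ n : I, ‖(inner ℂ (Ψ m) (Ψ n) : ℂ)‖ with hD
  set c : I → ℂ := fun m => (starRingEnd ℂ) (inner ℂ ψ (Ψ m)) / (D m : ℂ) with hc
  set v : H := ∑ m : I, c m • Ψ m with hv
  have hDpos : ∀ m, 0 < D m := hΨ
  have hcnorm : ∀ m, ‖c m‖ = ‖(inner ℂ ψ (Ψ m) : ℂ)‖ / D m := by
    intro m
    rw [hc]
    simp only []
    rw [norm_div, RCLike.norm_conj, Complex.norm_real,
      Real.norm_of_nonneg (hDpos m).le]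
  have hS : ∀ m, ‖c m‖ ^ 2 * D m = ‖(inner ℂ ψ (Ψ m) : ℂ)‖ ^ 2 / D m := by
    intro m
    rw [hcnorm m, div_pow]
    field_simp [(hDpos m).ne']
  have hinner : (inner ℂ ψ v : ℂ) = ∑ m : I, c m * inner ℂ ψ (Ψ m) := by
    simp [hv, inner_sum, inner_smul_right]
  have hre : RCLike.re (inner ℂ ψ v : ℂ) = ∑ m : I, ‖(inner ℂ ψ (Ψ m) : ℂ)‖ ^ 2 / D m := by
    rw [hinner, map_sum]
    refine Finset.sum_congr rfl fun m _ => ?_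
    have heq : c m * inner ℂ ψ (Ψ m)
        = ((‖(inner ℂ ψ (Ψ m) : ℂ)‖ ^ 2 / D m : ℝ) : ℂ) := by
      rw [hc]
      simp only []
      rw [div_mul_eq_mul_div, RCLike.conj_mul]
      push_cast
      rfl
    rw [heq]
    exact Complex.ofReal_re _
  have hvsq : ‖v‖ ^ 2 ≤ ∑ m : I, ‖c m‖ ^ 2 * D m := by
    have h1 : ‖v‖ ^ 2 = RCLike.re (inner ℂ v v : ℂ) :=
      (inner_self_eq_norm_sq (𝕜 := ℂ) v).symm
    have h2 : (inner ℂ v v : ℂ) = ∑ m : I, ∑ n : I,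
        (starRingEnd ℂ) (c m) * c n * inner ℂ (Ψ m) (Ψ n) := by
      simp only [hv, inner_sum, sum_inner, inner_smul_left, inner_smul_right,
        Finset.mul_sum]
      rw [Finset.sum_comm]
      exact Finset.sum_congr rfl fun m _ => Finset.sum_congr rfl fun n _ => by ring
    rw [h1, h2, map_sum]
    calc ∑ m : I, RCLike.re (∑ n : I, (starRingEnd ℂ) (c m) * c n * inner ℂ (Ψ m) (Ψ n))
        ≤ ∑ m : I, ∑ n : I, ‖c m‖ * ‖c n‖ * ‖(inner ℂ (Ψ m) (Ψ n) : ℂ)‖ := by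
          refine Finset.sum_le_sum fun m _ => ?_
          rw [map_sum]
          refine Finset.sum_le_sum fun n _ => ?_
          calc RCLike.re ((starRingEnd ℂ) (c m) * c n * inner ℂ (Ψ m) (Ψ n))
              ≤ ‖(starRingEnd ℂ) (c m) * c n * inner ℂ (Ψ m) (Ψ n)‖ :=
                RCLike.re_le_norm _
            _ = ‖c m‖ * ‖c n‖ * ‖(inner ℂ (Ψ m) (Ψ n) : ℂ)‖ := by
                simp [norm_mul]
      _ ≤ ∑ m : I, ∑ n : I, (‖c m‖ ^ 2 + ‖c n‖ ^ 2) / 2 * ‖(inner ℂ (Ψ m) (Ψ n) : ℂ)‖ := by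
          refine Finset.sum_le_sum fun m _ => Finset.sum_le_sum fun n _ => ?_
          have hab : ‖c m‖ * ‖c n‖ ≤ (‖c m‖ ^ 2 + ‖c n‖ ^ 2) / 2 := by
            nlinarith [sq_nonneg (‖c m‖ - ‖c n‖)]
          exact mul_le_mul_of_nonneg_right hab (norm_nonneg _)
      _ = ∑ m : I, ‖c m‖ ^ 2 * D m := by
          have hsym : ∀ m n : I, ‖(inner ℂ (Ψ n) (Ψ m) : ℂ)‖ = ‖(inner ℂ (Ψ m) (Ψ n) : ℂ)‖ :=
            fun m n => norm_inner_symm _ _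
          have hsplit : ∑ m : I, ∑ n : I, (‖c m‖ ^ 2 + ‖c n‖ ^ 2) / 2 * ‖(inner ℂ (Ψ m) (Ψ n) : ℂ)‖
              = (∑ m : I, ∑ n : I, ‖c m‖ ^ 2 * ‖(inner ℂ (Ψ m) (Ψ n) : ℂ)‖) / 2
                + (∑ m : I, ∑ n : I, ‖c n‖ ^ 2 * ‖(inner ℂ (Ψ m) (Ψ n) : ℂ)‖) / 2 := by
            rw [← add_div, ← Finset.sum_add_distrib, Finset.sum_div]
            refine Finset.sum_congr rfl fun m _ => ?_
            rw [← Finset.sum_add_distrib, Finset.sum_div]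
            refine Finset.sum_congr rfl fun n _ => ?_
            ring
          rw [hsplit]
          have hswap : ∑ m : I, ∑ n : I, ‖c n‖ ^ 2 * ‖(inner ℂ (Ψ m) (Ψ n) : ℂ)‖
              = ∑ m : I, ∑ n : I, ‖c m‖ ^ 2 * ‖(inner ℂ (Ψ m) (Ψ n) : ℂ)‖ := by
            rw [Finset.sum_comm]
            exact Finset.sum_congr rfl fun m _ => Finset.sum_congr rfl fun n _ => by
              rw [hsym m n]
          rw [hswap, ← add_div, add_self_div_two]
          exact Finset.sum_congr rfl fun m _ => by
            rw [hD, Finset.mul_sum]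
  have h0 : (0:ℝ) ≤ ‖ψ - v‖ ^ 2 := sq_nonneg _
  rw [norm_sub_sq (𝕜 := ℂ)] at h0
  have hfin : ∑ m : I, ‖c m‖ ^ 2 * D m = ∑ m : I, ‖(inner ℂ ψ (Ψ m) : ℂ)‖ ^ 2 / D m :=
    Finset.sum_congr rfl fun m _ => hS m
  rw [hfin] at hvsq
  have hgoal : ∑ m : I, ‖(inner ℂ ψ (Ψ m) : ℂ)‖ ^ 2 / D m ≤ ‖ψ‖ ^ 2 := by
    rw [hre] at h0
    linarith
  simpa [hD] using hgoal
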